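/- Let r, m be integers with 0 ≤ r ≤ m and let ρ(r,m) = Σ_{i=0}^{r} C(m,i) (sum of binomial coefficients). Then every integer t with 1 ≤ t ≤ ρ(r,m) can be written as t = Σ_{i=1}^{k} ρ(r_i, m_i) for some k ≥ 1, where r_1 ≥ r_2 ≥ ... ≥ r_k ≥ 0 (non-increasing) and m_i − r_i = m − r − i + 1 for every i ∈ {1,...,k}; moreover this representation is unique. -/

import Mathlib

/-- `rho r m = Σ_{i=0}^{r} C(m,i)`, the dimension of the binary Reed–Muller code `RM(r,m)`. -/
def rho (r m : ℕ) : ℕ := ∑ i ∈ Finset.range (r + 1), Nat.choose m i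

namespace Stmt9

lemma rho_pos (r m : ℕ) : 1 ≤ rho r m := by
  have : Nat.choose m 0 ≤ rho r m :=
    Finset.single_le_sum (f := fun i => Nat.choose m i) (fun i _ => Nat.zero_le _) (by simp)
  simpa using this

lemma rho_zero_right (r : ℕ) : rho r 0 = 1 := by
  induction r with
  | zero => simp [rho]
  | succ n ih =>
      rw [rho, Finset.sum_range_succ, ← rho, ih, Nat.choose_eq_zero_of_lt (Nat.succ_pos n)]

lemma rho_zero_left (m : ℕ) : rho 0 m = 1 := by simp [rho]

lemma rho_succ_succ (r m : ℕ) : rho (r+1) (m+1) = rho (r+1) m + rho r m := by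
  unfold rho
  rw [Finset.sum_range_succ' (fun i => Nat.choose (m+1) i) (r+1),
      Finset.sum_range_succ' (fun i => Nat.choose m i) (r+1)]
  simp only [Nat.choose_succ_succ, Nat.choose_zero_right, Finset.sum_add_distrib,
      Nat.succ_eq_add_one]
  omega

lemma rho_le_succ (r m : ℕ) : rho r m ≤ rho (r+1) m := by
  unfold rho
  rw [Finset.sum_range_succ (fun i => Nat.choose m i) (r+1)]
  exact Nat.le_add_right _ _

lemma rho_mono_left (m : ℕ) : Monotone (rho · m) :=
  monotone_nat_of_le_succ (fun r => rho_le_succ r m)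

lemma rho_one (m : ℕ) : rho 1 m = m + 1 := by
  simp [rho, Finset.sum_range_succ]; omega

lemma rho_ge (r m : ℕ) (hr : 1 ≤ r) : m + 1 ≤ rho r m := by
  calc m + 1 = rho 1 m := (rho_one m).symm
  _ ≤ rho r m := rho_mono_left m hr

/-- `G d j a = rho a m` where `m + j = a + d`. -/
def G (d j a : ℕ) : ℕ := rho a (a + d - j)

lemma G_pos (d j a : ℕ) : 1 ≤ G d j a := rho_pos _ _

lemma G_pascal (d j a : ℕ) (h : j ≤ a + d) :
    G d j (a+1) = G d j a + G d (j+1) (a+1) := by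
  unfold G
  have h1 : a + 1 + d - j = (a + d - j) + 1 := by omega
  have h2 : a + 1 + d - (j+1) = a + d - j := by omega
  rw [h1, h2, rho_succ_succ]
  omega

lemma G_lt (d j a : ℕ) (h : j ≤ a + d) : G d j a < G d j (a+1) := by
  rw [G_pascal d j a h]
  have := G_pos d (j+1) (a+1)
  omega

lemma G_le_succ (d j a : ℕ) : G d j a ≤ G d j (a+1) := by
  by_cases h : j ≤ a + d
  · exact le_of_lt (G_lt d j a h)
  · have h0 : a + d - j = 0 := by omega
    unfold G
    rw [h0, rho_zero_right]
    exact rho_pos _ _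

lemma G_mono (d j : ℕ) : Monotone (G d j) :=
  monotone_nat_of_le_succ (G_le_succ d j)

lemma G_base (d j : ℕ) : G d j (j - d) = 1 := by
  unfold G
  rcases le_total j d with h | h
  · have h0 : j - d = 0 := by omega
    rw [h0, rho_zero_left]
  · have h0 : j - d + d - j = 0 := by omega
    rw [h0, rho_zero_right]

lemma G_big (d j t : ℕ) (ht : 1 ≤ t) : t < G d j (t + j) := by
  unfold G
  have h2 : t + j + d - j = t + d := by omega
  rw [h2]
  have := rho_ge (t+j) (t+d) (by omega)
  omega

lemma greedy (d j t : ℕ) (ht : 1 ≤ t) :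
    ∃ a, G d j a ≤ t ∧ t < G d j (a + 1) ∧ j ≤ a + d := by
  classical
  set a0 := Nat.findGreatest (fun a => G d j a ≤ t) (t + j) with ha0
  have hbase : G d j (j - d) ≤ t := by rw [G_base]; exact ht
  have hb2 : j - d ≤ t + j := by omega
  have hspec : G d j a0 ≤ t := Nat.findGreatest_spec (P := fun a => G d j a ≤ t) hb2 hbase
  have hle : a0 ≤ t + j := Nat.findGreatest_le (t + j)
  have hgt : t < G d j (a0 + 1) := by
    rcases eq_or_lt_of_le hle with heq | hlt
    · exfalso
      rw [heq] at hspec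
      have := G_big d j t ht
      omega
    · have h := Nat.findGreatest_is_greatest (Nat.lt_succ_self a0) hlt
      simp only [Nat.succ_eq_add_one] at h
      omega
  refine ⟨a0, hspec, hgt, ?_⟩
  by_contra h
  push_neg at h
  have h0 : a0 + 1 + d - j = 0 := by omega
  have : G d j (a0 + 1) = 1 := by unfold G; rw [h0, rho_zero_right]
  omega

def Valid (d : ℕ) : ℕ → List ℕ → Prop
  | _, [] => True
  | j, a :: l => j ≤ a + d ∧ (∀ b ∈ l, b ≤ a) ∧ Valid d (j+1) l

def sumRep (d : ℕ) : ℕ → List ℕ → ℕ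
  | _, [] => 0
  | j, a :: l => G d j a + sumRep d (j+1) l

lemma le_sum (d j a : ℕ) (L : List ℕ) : G d j a ≤ sumRep d j (a :: L) := by
  simp only [sumRep]
  exact Nat.le_add_right _ _

lemma one_le_sum (d j a : ℕ) (L : List ℕ) : 1 ≤ sumRep d j (a :: L) :=
  le_trans (G_pos d j a) (le_sum d j a L)

lemma sum_lt (d : ℕ) : ∀ (L : List ℕ) (j a : ℕ), Valid d j (a :: L) →
    sumRep d j (a :: L) < G d j (a+1) := by
  intro L
  induction L with
  | nil =>
      intro j a h
      obtain ⟨h1, -, -⟩ := h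
      have := G_lt d j a h1
      simp only [sumRep]
      omega
  | cons b M ih =>
      intro j a h
      obtain ⟨h1, h2, h3⟩ := h
      have hb : b ≤ a := h2 b (by simp)
      have ht := ih (j+1) b h3
      have hmono : G d (j+1) (b+1) ≤ G d (j+1) (a+1) := G_mono d (j+1) (by omega)
      have hp := G_pascal d j a h1
      show G d j a + sumRep d (j+1) (b :: M) < G d j (a+1)
      omega

lemma core_exists (d : ℕ) (t : ℕ) (ht : 1 ≤ t) : ∀ j, ∃ L, Valid d j L ∧ sumRep d j L = t := by
  induction t using Nat.strong_induction_on with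
  | _ t IH =>
    intro j
    obtain ⟨a0, h1, h2, h3⟩ := greedy d j t ht
    rcases eq_or_lt_of_le h1 with heq | hlt
    · exact ⟨[a0], ⟨h3, by simp, trivial⟩, by simpa [sumRep] using heq⟩
    · have ht' : 1 ≤ t - G d j a0 := by omega
      have htlt : t - G d j a0 < t := by have := G_pos d j a0; omega
      obtain ⟨L', hv', hs'⟩ := IH (t - G d j a0) htlt ht' (j+1)
      have hhead : ∀ b ∈ L', b ≤ a0 := by
        cases L' with
        | nil => simp
        | cons b M =>
            have hlow : G d (j+1) b ≤ t - G d j a0 := hs' ▸ le_sum d (j+1) b M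
            have hb : b ≤ a0 := by
              by_contra hba
              push_neg at hba
              have : G d (j+1) (a0+1) ≤ G d (j+1) b := G_mono d (j+1) (by omega)
              have hp := G_pascal d j a0 h3
              omega
            intro c hc
            rcases List.mem_cons.mp hc with rfl | hcM
            · exact hb
            · exact le_trans (hv'.2.1 c hcM) hb
      refine ⟨a0 :: L', ⟨h3, hhead, hv'⟩, ?_⟩
      show G d j a0 + sumRep d (j+1) L' = t
      omega

lemma core_unique (d : ℕ) (t : ℕ) : ∀ j L1 L2, Valid d j L1 → Valid d j L2 →
    sumRep d j L1 = t → sumRep d j L2 = t → L1 = L2 := by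
  induction t using Nat.strong_induction_on with
  | _ t IH =>
    intro j L1 L2 hv1 hv2 hs1 hs2
    cases L1 with
    | nil =>
        cases L2 with
        | nil => rfl
        | cons b M2 =>
            exfalso
            have := one_le_sum d j b M2
            simp [sumRep] at hs1
            omega
    | cons a M1 =>
        cases L2 with
        | nil =>
            exfalso
            have := one_le_sum d j a M1
            simp [sumRep] at hs2
            omega
        | cons b M2 =>
            have hub1 : t < G d j (a+1) := hs1 ▸ sum_lt d M1 j a hv1
            have hub2 : t < G d j (b+1) := hs2 ▸ sum_lt d M2 j b hv2
            have hlb1 : G d j a ≤ t := hs1 ▸ le_sum d j a M1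
            have hlb2 : G d j b ≤ t := hs2 ▸ le_sum d j b M2
            have hab : a = b := by
              by_contra hne
              rcases Nat.lt_or_ge a b with h | h
              · have : G d j (a+1) ≤ G d j b := G_mono d j (by omega)
                omega
              · rcases Nat.lt_or_ge b a with h' | h'
                · have : G d j (b+1) ≤ G d j a := G_mono d j (by omega)
                  omega
                · omega
            subst hab
            have hs1' : G d j a + sumRep d (j+1) M1 = t := hs1
            have hs2' : G d j a + sumRep d (j+1) M2 = t := hs2
            have htail : sumRep d (j+1) M1 = sumRep d (j+1) M2 := by omega
            have htlt : sumRep d (j+1) M1 < t := by have := G_pos d j a; omega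
            have := IH (sumRep d (j+1) M1) htlt (j+1) M1 M2 hv1.2.2 hv2.2.2 rfl htail.symm
            rw [this]

lemma get_cons_succ'' (a : ℕ) (M : List ℕ) (i : Fin M.length) :
    (a :: M).get i.succ = M.get i := rfl

lemma V1 (d : ℕ) : ∀ (L : List ℕ) (j : ℕ), Valid d j L →
    ∀ i : Fin L.length, j + i.1 ≤ L.get i + d := by
  intro L
  induction L with
  | nil => intro j _ i; exact i.elim0
  | cons a M ih =>
      intro j h i
      obtain ⟨h1, h2, h3⟩ := h
      induction i using Fin.cases with
      | zero => simpa using h1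
      | succ i =>
          have := ih (j+1) h3 i
          simp only [get_cons_succ'', Fin.val_succ]
          omega

lemma V2 (d : ℕ) : ∀ (L : List ℕ) (j : ℕ), Valid d j L →
    ∀ i k : Fin L.length, i ≤ k → L.get k ≤ L.get i := by
  intro L
  induction L with
  | nil => intro j _ i; exact i.elim0
  | cons a M ih =>
      intro j h i k hik
      obtain ⟨h1, h2, h3⟩ := h
      induction i using Fin.cases with
      | zero =>
          induction k using Fin.cases with
          | zero => exact le_refl _
          | succ k =>
              rw [get_cons_succ'']
              show M.get k ≤ a
              exact h2 _ (List.get_mem _ _)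
      | succ i =>
          induction k using Fin.cases with
          | zero =>
              exfalso
              simp [Fin.le_def] at hik
          | succ k =>
              have hik' : i ≤ k := by
                simp only [Fin.le_def, Fin.val_succ] at hik
                exact Fin.le_def.mpr (by omega)
              simpa using ih (j+1) h3 i k hik'

lemma V3 (d : ℕ) : ∀ (L : List ℕ) (j : ℕ), sumRep d j L =
    ∑ i : Fin L.length, rho (L.get i) (L.get i + d - (j + i.1)) := by
  intro L
  induction L with
  | nil => intro j; simp [sumRep]
  | cons a M ih =>
      intro j
      show G d j a + sumRep d (j+1) M = _
      rw [show (∑ i : Fin (a :: M).length, rho ((a :: M).get i) ((a :: M).get i + d - (j + i.1)))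
            = (∑ i : Fin (M.length + 1), rho ((a :: M).get i) ((a :: M).get i + d - (j + i.1)))
          from rfl]
      rw [Fin.sum_univ_succ]
      simp only [get_cons_succ'', Fin.val_zero, Fin.val_succ, Nat.add_zero]
      rw [ih (j+1)]
      congr 1
      apply Finset.sum_congr rfl
      intro i _
      congr 1
      omega

lemma V4 (d : ℕ) : ∀ (L : List ℕ) (j : ℕ),
    (∀ i : Fin L.length, j + i.1 ≤ L.get i + d) →
    (∀ i k : Fin L.length, i ≤ k → L.get k ≤ L.get i) →
    Valid d j L := by
  intro L
  induction L with
  | nil => intro j _ _; trivial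
  | cons a M ih =>
      intro j h1 h2
      refine ⟨?_, ?_, ?_⟩
      · simpa using h1 ⟨0, Nat.succ_pos _⟩
      · intro b hb
        obtain ⟨n, rfl⟩ := List.mem_iff_get.mp hb
        have := h2 ⟨0, Nat.succ_pos _⟩ n.succ (by simp [Fin.le_def])
        simpa using this
      · apply ih (j+1)
        · intro i
          have := h1 i.succ
          simp only [get_cons_succ'', Fin.val_succ] at this
          omega
        · intro i k hik
          have := h2 i.succ k.succ (by simp only [Fin.le_def, Fin.val_succ]; exact Nat.succ_le_succ hik)
          simpa using this

end Stmt9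

open Stmt9 in
/-- Canonical `(r,m)`-representation: every `1 ≤ t ≤ rho r m` can be written uniquely as
`t = Σ_{i=1}^{k} rho rᵢ mᵢ` with `k ≥ 1`, `r₁ ≥ r₂ ≥ ⋯ ≥ r_k` and `mᵢ − rᵢ = m − r − i + 1`
(encoded over `ℕ`, with zero-based `i`, as `mᵢ + i = rᵢ + (m − r)`).
A representation is a pair `rep = ⟨k, fun i => (rᵢ, mᵢ)⟩`. -/
theorem stmt9 {r m t : ℕ} (hrm : r ≤ m) (ht1 : 1 ≤ t) (ht2 : t ≤ rho r m) :
    ∃! rep : (k : ℕ) × (Fin k → ℕ × ℕ),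
      0 < rep.1 ∧
      (∀ i j : Fin rep.1, i ≤ j → (rep.2 j).1 ≤ (rep.2 i).1) ∧
      (∀ i : Fin rep.1, (rep.2 i).2 + i.1 = (rep.2 i).1 + (m - r)) ∧
      t = ∑ i : Fin rep.1, rho (rep.2 i).1 (rep.2 i).2 := by
  classical
  obtain ⟨L, hLv, hLs⟩ := core_exists (m - r) t ht1 0
  refine ⟨⟨L.length, fun i => (L.get i, L.get i + (m - r) - i.1)⟩, ⟨?_, ?_, ?_, ?_⟩, ?_⟩
  · -- 0 < L.length
    cases L with
    | nil =>
        exfalso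
        have : sumRep (m - r) 0 ([] : List ℕ) = 0 := rfl
        omega
    | cons a M => simp
  · -- antitone
    intro i k hik
    exact V2 (m - r) L 0 hLv i k hik
  · -- difference condition
    intro i
    have := V1 (m - r) L 0 hLv i
    show (L.get i + (m - r) - i.1) + i.1 = L.get i + (m - r)
    omega
  · -- sum
    rw [← hLs, V3]
    apply Finset.sum_congr rfl
    intro i _
    show rho (L.get i) (L.get i + (m - r) - (0 + i.1)) = rho (L.get i) (L.get i + (m - r) - i.1)
    congr 1
    omega
  · -- uniqueness
    rintro ⟨k, f⟩ ⟨hk', hmono', heqn', hsum'⟩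
    simp only [] at hk' hmono' heqn' hsum'
    set L' : List ℕ := List.ofFn (fun i => (f i).1) with hL'def
    have hlen : L'.length = k := List.length_ofFn
    have hv' : Valid (m - r) 0 L' := by
      apply V4
      · intro i
        have hget : L'.get i = (f (Fin.cast hlen i)).1 := List.get_ofFn _ i
        have := heqn' (Fin.cast hlen i)
        simp only [Fin.coe_cast] at this
        omega
      · intro i k' hik
        rw [List.get_ofFn, List.get_ofFn]
        exact hmono' _ _ (Fin.le_def.mpr (by simp only [Fin.coe_cast]; exact Fin.le_def.mp hik))
    have hs' : sumRep (m - r) 0 L' = t := by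
      rw [V3]
      rw [hsum']
      rw [← Fin.sum_congr' (fun i : Fin L'.length =>
        rho (L'.get i) (L'.get i + (m - r) - (0 + i.1))) hlen.symm]
      apply Finset.sum_congr rfl
      intro i _
      have hget : L'.get (Fin.cast hlen.symm i) = (f (Fin.cast hlen (Fin.cast hlen.symm i))).1 :=
        List.get_ofFn _ _
      have hcast : Fin.cast hlen (Fin.cast hlen.symm i) = i := by
        apply Fin.ext; simp
      rw [hcast] at hget
      rw [hget]
      have := heqn' i
      have hval : (Fin.cast hlen.symm i).1 = i.1 := by simp
      rw [hval]
      congr 1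
      omega
    have hLL : L' = L := core_unique (m - r) t 0 L' L hv' hLv hs' hLs
    have hkL : k = L.length := by rw [← hLL, hlen]
    subst hkL
    refine congrArg (Sigma.mk L.length) (funext fun i => ?_)
    have hget : L'.get (Fin.cast hlen.symm i) = (f (Fin.cast hlen (Fin.cast hlen.symm i))).1 :=
      List.get_ofFn _ _
    have hcast : Fin.cast hlen (Fin.cast hlen.symm i) = i := by
      apply Fin.ext; simp
    rw [hcast] at hget
    have hgetL : L'.get (Fin.cast hlen.symm i) = L.get i := by
      rw [List.get_of_eq hLL]
      congr 1
    have hfst : (f i).1 = L.get i := by rw [← hget, hgetL]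
    have hsnd : (f i).2 = L.get i + (m - r) - i.1 := by
      have := heqn' i
      omega
    exact Prod.ext hfst hsnd
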